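/- The variance of the number of pure Nash equilibria in the random N-player binary game is τ_N² = 2^N b_N + 2^N N (α(1-β)^{2N-2} − (1-β)^{2N}), where b_N = (1-β)^N(1 − (1-β)^N). -/

import Mathlib

open MeasureTheory ProbabilityTheory
open scoped Classical

section Helpers

variable {Ω ι κ : Type*} [MeasurableSpace Ω] {μ : Measure Ω}

lemma grouping_iIndep [IsProbabilityMeasure μ]
    (Z : ι → Ω → ℝ) (hmeas : ∀ p, Measurable (Z p))
    (hindep : iIndepFun Z μ)
    (T : κ → Finset ι) (hdisj : ∀ k l, k ≠ l → Disjoint (T k) (T l)) :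
    iIndep (fun k => ⨆ p ∈ T k, MeasurableSpace.comap (Z p) inferInstance) μ := by
  set m : ι → MeasurableSpace Ω := fun p => MeasurableSpace.comap (Z p) inferInstance with hm
  set π : κ → Set (Set Ω) := fun k => piiUnionInter (fun p => { s | MeasurableSet[m p] s }) (T k) with hπ
  refine iIndepSets.iIndep (fun k => ?_) π (fun k => ?_) (fun k => ?_) ?_
  · exact iSup₂_le fun p _ => (hmeas p).comap_le
  · exact isPiSystem_piiUnionInter _ (fun p => @MeasurableSpace.isPiSystem_measurableSet Ω (m p)) _
  · exact (generateFrom_piiUnionInter_measurableSet m (T k : Set ι)).symm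
  · rw [iIndepSets_iff]
    intro S c hc
    classical
    have hc' : ∀ k, ∃ (F : Finset ι) (f : ι → Set Ω), (k ∈ S → ((F : Set ι) ⊆ T k ∧
        (∀ p ∈ F, MeasurableSet[m p] (f p)) ∧ c k = ⋂ p ∈ F, f p)) := by
      intro k
      by_cases hk : k ∈ S
      · obtain ⟨F, hFsub, f, hf, hceq⟩ := hc k hk
        exact ⟨F, f, fun _ => ⟨hFsub, hf, hceq⟩⟩
      · exact ⟨∅, fun _ => Set.univ, fun h => absurd h hk⟩
    choose F f hFf using hc'
    have hFsub : ∀ k ∈ S, (F k : Set ι) ⊆ T k := fun k hk => (hFf k hk).1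
    have hfmem : ∀ k ∈ S, ∀ p ∈ F k, MeasurableSet[m p] (f k p) := fun k hk => (hFf k hk).2.1
    have hceq : ∀ k ∈ S, c k = ⋂ p ∈ F k, f k p := fun k hk => (hFf k hk).2.2
    have huniq : ∀ k l p, k ∈ S → l ∈ S → p ∈ F k → p ∈ F l → k = l := by
      intro k l p hk hl hpk hpl
      by_contra hne
      exact (Finset.disjoint_coe.2 (hdisj k l hne)).ne_of_mem (hFsub k hk hpk) (hFsub l hl hpl) rfl
    set P : Finset ι := S.biUnion F with hP
    set g : ι → Set Ω := fun p => if h : ∃ k ∈ S, p ∈ F k then f h.choose p else Set.univ with hg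
    have hgp : ∀ k ∈ S, ∀ p ∈ F k, g p = f k p := by
      intro k hk p hp
      have h : ∃ k ∈ S, p ∈ F k := ⟨k, hk, hp⟩
      simp only [hg, dif_pos h]
      obtain ⟨hkS, hpF⟩ := h.choose_spec
      rw [huniq _ _ p hkS hk hpF hp]
    have hgmeas : ∀ p ∈ P, MeasurableSet[m p] (g p) := by
      intro p hp
      obtain ⟨k, hk, hpk⟩ := Finset.mem_biUnion.1 hp
      rw [hgp k hk p hpk]; exact hfmem k hk p hpk
    have hInter : ⋂ k ∈ S, c k = ⋂ p ∈ P, g p := by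
      rw [hP, Finset.set_biInter_biUnion]
      exact Set.iInter₂_congr fun k hk => by
        rw [hceq k hk]
        exact Set.iInter₂_congr fun p hp => (hgp k hk p hp).symm
    have hdisjF : (S : Set κ).PairwiseDisjoint F := by
      intro k hk l hl hne
      exact Finset.disjoint_coe.1 <| Set.disjoint_of_subset (hFsub k hk) (hFsub l hl)
        (Finset.disjoint_coe.2 (hdisj k l hne))
    calc μ (⋂ k ∈ S, c k) = μ (⋂ p ∈ P, g p) := by rw [hInter]
      _ = ∏ p ∈ P, μ (g p) := hindep.meas_biInter hgmeas
      _ = ∏ k ∈ S, ∏ p ∈ F k, μ (g p) := Finset.prod_biUnion hdisjF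
      _ = ∏ k ∈ S, μ (c k) := by
          refine Finset.prod_congr rfl fun k hk => ?_
          rw [hceq k hk, hindep.meas_biInter (fun p hp => hfmem k hk p hp)]
          exact Finset.prod_congr rfl fun p hp => by rw [hgp k hk p hp]

lemma grouping_meas_iInter [IsProbabilityMeasure μ] [Fintype κ]
    (Z : ι → Ω → ℝ) (hmeas : ∀ p, Measurable (Z p))
    (hindep : iIndepFun Z μ)
    (T : κ → Finset ι) (hdisj : ∀ k l, k ≠ l → Disjoint (T k) (T l))
    (C : κ → Set Ω)
    (hC : ∀ k, MeasurableSet[⨆ p ∈ T k, MeasurableSpace.comap (Z p) inferInstance] (C k)) :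
    μ (⋂ k, C k) = ∏ k, μ (C k) :=
  (grouping_iIndep Z hmeas hindep T hdisj).meas_iInter hC

lemma measSet_le_biSup {Z : ι → Ω → ℝ} {T : Finset ι} {p q : ι}
    (hp : p ∈ T) (hq : q ∈ T) :
    MeasurableSet[⨆ r ∈ T, MeasurableSpace.comap (Z r) inferInstance] {ω | Z p ω ≤ Z q ω} := by
  have hp' : MeasurableSpace.comap (Z p) inferInstance
      ≤ ⨆ r ∈ T, MeasurableSpace.comap (Z r) inferInstance :=
    le_iSup₂ (f := fun (r : ι) (_ : r ∈ T) => MeasurableSpace.comap (Z r) inferInstance) p hp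
  have hq' : MeasurableSpace.comap (Z q) inferInstance
      ≤ ⨆ r ∈ T, MeasurableSpace.comap (Z r) inferInstance :=
    le_iSup₂ (f := fun (r : ι) (_ : r ∈ T) => MeasurableSpace.comap (Z r) inferInstance) q hq
  have hZp : Measurable[⨆ r ∈ T, MeasurableSpace.comap (Z r) inferInstance] (Z p) :=
    measurable_iff_comap_le.2 hp'
  have hZq : Measurable[⨆ r ∈ T, MeasurableSpace.comap (Z r) inferInstance] (Z q) :=
    measurable_iff_comap_le.2 hq'
  exact measurableSet_le hZp hZq

lemma meas_inter_le_le [IsProbabilityMeasure μ]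
    (Z : ι → Ω → ℝ) (hmeas : ∀ p, Measurable (Z p))
    (hindep : iIndepFun Z μ)
    (p q r t : ι) (h1 : p ≠ r) (h2 : p ≠ t) (h3 : q ≠ r) (h4 : q ≠ t) :
    μ ({ω | Z p ω ≤ Z q ω} ∩ {ω | Z r ω ≤ Z t ω})
      = μ {ω | Z p ω ≤ Z q ω} * μ {ω | Z r ω ≤ Z t ω} := by
  classical
  set C : Bool → Set Ω := fun b => cond b {ω | Z p ω ≤ Z q ω} {ω | Z r ω ≤ Z t ω} with hCdef
  set T : Bool → Finset ι := fun b => cond b {p, q} {r, t} with hTdef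
  have hkey : ∀ x, x ∈ ({p, q} : Finset ι) → x ∈ ({r, t} : Finset ι) → False := by
    intro x hx hy
    simp only [Finset.mem_insert, Finset.mem_singleton] at hx hy
    rcases hx with rfl | rfl <;> rcases hy with rfl | rfl <;> simp_all
  have hdisj : ∀ k l, k ≠ l → Disjoint (T k) (T l) := by
    intro k l hkl
    match k, l with
    | true, false => exact Finset.disjoint_left.2 (fun x hx hy => (hkey x hx hy).elim)
    | false, true => exact Finset.disjoint_left.2 (fun x hx hy => (hkey x hy hx).elim)
    | true, true => exact absurd rfl hkl
    | false, false => exact absurd rfl hkl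
  have hC : ∀ k, MeasurableSet[⨆ x ∈ T k, MeasurableSpace.comap (Z x) inferInstance] (C k) := by
    intro k
    match k with
    | false =>
      exact measSet_le_biSup (T := ({r, t} : Finset ι)) (Z := Z) (by simp) (by simp)
    | true =>
      exact measSet_le_biSup (T := ({p, q} : Finset ι)) (Z := Z) (by simp) (by simp)
  have h := grouping_meas_iInter Z hmeas hindep T hdisj C hC
  have hI : ⋂ b, C b = {ω | Z p ω ≤ Z q ω} ∩ {ω | Z r ω ≤ Z t ω} := by
    ext ω; simp [hCdef, Bool.forall_bool, and_comm]
  rw [hI] at h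
  rw [h, Fintype.prod_bool]
  rfl

end Helpers

section Flip
variable {N : ℕ}

/-- Flip coordinate `i` of a vertex of the hypercube. -/
def nflip (s : Fin N → Bool) (i : Fin N) : Fin N → Bool := Function.update s i (!s i)

lemma nflip_apply_same (s : Fin N → Bool) (i : Fin N) : nflip s i i = !s i := by
  simp [nflip]

lemma nflip_apply_ne (s : Fin N → Bool) {i j : Fin N} (h : j ≠ i) : nflip s i j = s j := by
  simp [nflip, Function.update_of_ne h]

lemma nflip_ne (s : Fin N → Bool) (i : Fin N) : nflip s i ≠ s := by
  intro h
  have := congrFun h i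
  rw [nflip_apply_same] at this
  exact Bool.not_ne_self _ this

lemma nflip_nflip (s : Fin N → Bool) (i : Fin N) : nflip (nflip s i) i = s := by
  funext j
  by_cases hj : j = i
  · subst hj
    rw [nflip_apply_same, nflip_apply_same, Bool.not_not]
  · rw [nflip_apply_ne _ hj, nflip_apply_ne _ hj]

lemma nflip_inj_idx {s : Fin N → Bool} {i j : Fin N} (h : nflip s i = nflip s j) : i = j := by
  by_contra hne
  have := congrFun h i
  rw [nflip_apply_same, nflip_apply_ne _ hne] at this
  exact Bool.not_ne_self _ this

lemma nflip_inj_base {s t : Fin N → Bool} {i : Fin N} (h : nflip s i = nflip t i) : s = t := by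
  funext j
  by_cases hj : j = i
  · subst hj
    have := congrFun h j
    rw [nflip_apply_same, nflip_apply_same] at this
    exact Bool.not_inj this
  · have := congrFun h j
    rwa [nflip_apply_ne _ hj, nflip_apply_ne _ hj] at this

end Flip

section Events

variable {Ω : Type*} [MeasurableSpace Ω] {μ : Measure Ω} {N : ℕ}

/-- The event that at coordinate `i`, the payoff at `s` beats the payoff at the flip. -/
def Aev (Z : (Fin N × (Fin N → Bool)) → Ω → ℝ) (s : Fin N → Bool) (i : Fin N) : Set Ω :=
  {ω | Z (i, nflip s i) ω ≤ Z (i, s) ω}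

/-- The event that `s` is a pure Nash equilibrium. -/
def Eev (Z : (Fin N × (Fin N → Bool)) → Ω → ℝ) (s : Fin N → Bool) : Set Ω :=
  ⋂ i, Aev Z s i

lemma Aev_measurable (Z : (Fin N × (Fin N → Bool)) → Ω → ℝ) (hmeas : ∀ p, Measurable (Z p))
    (s : Fin N → Bool) (i : Fin N) : MeasurableSet (Aev Z s i) :=
  measurableSet_le (hmeas _) (hmeas _)

lemma Eev_measurable (Z : (Fin N × (Fin N → Bool)) → Ω → ℝ) (hmeas : ∀ p, Measurable (Z p))
    (s : Fin N → Bool) : MeasurableSet (Eev Z s) :=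
  MeasurableSet.iInter fun i => Aev_measurable Z hmeas s i

variable [IsProbabilityMeasure μ]

lemma master_prod (Z : (Fin N × (Fin N → Bool)) → Ω → ℝ)
    (hmeas : ∀ p, Measurable (Z p))
    (hindep : iIndepFun Z μ)
    (s t : Fin N → Bool) :
    μ (⋂ i, (Aev Z s i ∩ Aev Z t i)) = ∏ i, μ (Aev Z s i ∩ Aev Z t i) := by
  classical
  refine grouping_meas_iInter Z hmeas hindep
    (fun i => {(i, nflip s i), (i, s), (i, nflip t i), (i, t)}) ?_ _ ?_
  · intro k l hkl
    refine Finset.disjoint_left.2 fun x hx hy => hkl ?_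
    simp only [Finset.mem_insert, Finset.mem_singleton] at hx hy
    have h1 : x.1 = k := by rcases hx with rfl|rfl|rfl|rfl <;> rfl
    have h2 : x.1 = l := by rcases hy with rfl|rfl|rfl|rfl <;> rfl
    rw [← h1, h2]
  · intro i
    exact (measSet_le_biSup (by simp) (by simp)).inter (measSet_le_biSup (by simp) (by simp))

lemma meas_Aev (Z : (Fin N × (Fin N → Bool)) → Ω → ℝ) {β : ℝ}
    (hle : ∀ p q, p ≠ q → μ {ω | Z p ω ≤ Z q ω} = ENNReal.ofReal (1 - β))
    (s : Fin N → Bool) (i : Fin N) :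
    μ (Aev Z s i) = ENNReal.ofReal (1 - β) :=
  hle _ _ (fun h => nflip_ne s i (congrArg Prod.snd h))

lemma meas_Eev (Z : (Fin N × (Fin N → Bool)) → Ω → ℝ) {β : ℝ}
    (hmeas : ∀ p, Measurable (Z p))
    (hindep : iIndepFun Z μ)
    (hle : ∀ p q, p ≠ q → μ {ω | Z p ω ≤ Z q ω} = ENNReal.ofReal (1 - β))
    (hβ1 : β ≤ 1) (s : Fin N → Bool) :
    μ (Eev Z s) = ENNReal.ofReal ((1 - β) ^ N) := by
  have h := master_prod Z hmeas hindep s s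
  simp only [Set.inter_self] at h
  rw [Eev, h]
  simp only [meas_Aev Z hle]
  rw [Finset.prod_const, Finset.card_univ, Fintype.card_fin,
    ← ENNReal.ofReal_pow (by linarith)]

lemma meas_Eev_inter_far (Z : (Fin N × (Fin N → Bool)) → Ω → ℝ) {β : ℝ}
    (hmeas : ∀ p, Measurable (Z p))
    (hindep : iIndepFun Z μ)
    (hle : ∀ p q, p ≠ q → μ {ω | Z p ω ≤ Z q ω} = ENNReal.ofReal (1 - β))
    (hβ1 : β ≤ 1) (s t : Fin N → Bool) (hts : t ≠ s) (hflip : ∀ j, nflip s j ≠ t) :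
    μ (Eev Z s ∩ Eev Z t) = ENNReal.ofReal ((1 - β) ^ (2 * N)) := by
  have hI : Eev Z s ∩ Eev Z t = ⋂ i, (Aev Z s i ∩ Aev Z t i) := by
    rw [Eev, Eev, Set.iInter_inter_distrib]
  rw [hI, master_prod Z hmeas hindep s t]
  have hfac : ∀ i, μ (Aev Z s i ∩ Aev Z t i)
      = ENNReal.ofReal (1 - β) * ENNReal.ofReal (1 - β) := by
    intro i
    have h1 : ((i, nflip s i) : Fin N × (Fin N → Bool)) ≠ (i, nflip t i) := by
      intro h
      exact hts (nflip_inj_base (congrArg Prod.snd h)).symm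
    have h2 : ((i, nflip s i) : Fin N × (Fin N → Bool)) ≠ (i, t) :=
      fun h => hflip i (congrArg Prod.snd h)
    have h3 : ((i, s) : Fin N × (Fin N → Bool)) ≠ (i, nflip t i) := by
      intro h
      have hs : s = nflip t i := congrArg Prod.snd h
      exact hflip i (by rw [hs, nflip_nflip])
    have h4 : ((i, s) : Fin N × (Fin N → Bool)) ≠ (i, t) :=
      fun h => hts (congrArg Prod.snd h).symm
    rw [show Aev Z s i ∩ Aev Z t i
        = ({ω | Z (i, nflip s i) ω ≤ Z (i, s) ω} ∩ {ω | Z (i, nflip t i) ω ≤ Z (i, t) ω}) from rfl,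
      meas_inter_le_le Z hmeas hindep _ _ _ _ h1 h2 h3 h4,
      hle _ _ (fun h => nflip_ne s i (congrArg Prod.snd h)),
      hle _ _ (fun h => nflip_ne t i (congrArg Prod.snd h))]
  simp only [hfac]
  rw [Finset.prod_const, Finset.card_univ, Fintype.card_fin,
    ← ENNReal.ofReal_mul (by linarith), ← ENNReal.ofReal_pow (by nlinarith),
    ← pow_two, ← pow_mul]

lemma meas_Eev_inter_nbr (Z : (Fin N × (Fin N → Bool)) → Ω → ℝ) {α β : ℝ}
    (hmeas : ∀ p, Measurable (Z p))
    (hindep : iIndepFun Z μ)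
    (hαZ : ∀ p q, p ≠ q → μ {ω | Z p ω = Z q ω} = ENNReal.ofReal α)
    (hle : ∀ p q, p ≠ q → μ {ω | Z p ω ≤ Z q ω} = ENNReal.ofReal (1 - β))
    (hα0 : 0 ≤ α) (hβ1 : β ≤ 1) (s : Fin N → Bool) (j : Fin N) :
    μ (Eev Z s ∩ Eev Z (nflip s j)) = ENNReal.ofReal (α * (1 - β) ^ (2 * N - 2)) := by
  classical
  set t : Fin N → Bool := nflip s j with ht
  have hI : Eev Z s ∩ Eev Z t = ⋂ i, (Aev Z s i ∩ Aev Z t i) := by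
    rw [Eev, Eev, Set.iInter_inter_distrib]
  rw [hI, master_prod Z hmeas hindep s t]
  have hfacj : μ (Aev Z s j ∩ Aev Z t j) = ENNReal.ofReal α := by
    have hAs : Aev Z s j = {ω | Z (j, t) ω ≤ Z (j, s) ω} := rfl
    have hAt : Aev Z t j = {ω | Z (j, s) ω ≤ Z (j, t) ω} := by
      rw [Aev, ht, nflip_nflip]
    have : Aev Z s j ∩ Aev Z t j = {ω | Z (j, s) ω = Z (j, t) ω} := by
      rw [hAs, hAt]
      ext ω
      simp only [Set.mem_inter_iff, Set.mem_setOf_eq]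
      constructor
      · exact fun h => le_antisymm h.2 h.1
      · exact fun h => ⟨h.ge, h.le⟩
    rw [this]
    exact hαZ _ _ (fun h => nflip_ne s j ((congrArg Prod.snd h).symm))
  have hfac : ∀ i, i ≠ j → μ (Aev Z s i ∩ Aev Z t i)
      = ENNReal.ofReal (1 - β) * ENNReal.ofReal (1 - β) := by
    intro i hij
    have hst : s ≠ t := (nflip_ne s j).symm
    have h1 : ((i, nflip s i) : Fin N × (Fin N → Bool)) ≠ (i, nflip t i) := by
      intro h
      exact hst (nflip_inj_base (congrArg Prod.snd h))
    have h2 : ((i, nflip s i) : Fin N × (Fin N → Bool)) ≠ (i, t) := by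
      intro h
      exact hij (nflip_inj_idx ((congrArg Prod.snd h).trans ht))
    have h3 : ((i, s) : Fin N × (Fin N → Bool)) ≠ (i, nflip t i) := by
      intro h
      have hs : s = nflip t i := congrArg Prod.snd h
      have : nflip s i = t := by rw [hs, nflip_nflip]
      exact hij (nflip_inj_idx (this.trans ht))
    have h4 : ((i, s) : Fin N × (Fin N → Bool)) ≠ (i, t) :=
      fun h => hst (congrArg Prod.snd h)
    rw [show Aev Z s i ∩ Aev Z t i
        = ({ω | Z (i, nflip s i) ω ≤ Z (i, s) ω} ∩ {ω | Z (i, nflip t i) ω ≤ Z (i, t) ω}) from rfl,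
      meas_inter_le_le Z hmeas hindep _ _ _ _ h1 h2 h3 h4,
      hle _ _ (fun h => nflip_ne s i (congrArg Prod.snd h)),
      hle _ _ (fun h => nflip_ne t i (congrArg Prod.snd h))]
  rw [← Finset.mul_prod_erase Finset.univ _ (Finset.mem_univ j), hfacj]
  have hprod : ∏ i ∈ Finset.univ.erase j, μ (Aev Z s i ∩ Aev Z t i)
      = ENNReal.ofReal ((1 - β) ^ (2 * N - 2)) := by
    rw [Finset.prod_congr rfl (fun i hi => hfac i (Finset.ne_of_mem_erase hi)),
      Finset.prod_const, Finset.card_erase_of_mem (Finset.mem_univ j),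
      Finset.card_univ, Fintype.card_fin,
      ← ENNReal.ofReal_mul (by linarith), ← ENNReal.ofReal_pow (by nlinarith),
      ← pow_two, ← pow_mul]
    congr 2
    omega
  rw [hprod, ← ENNReal.ofReal_mul hα0]

end Events

lemma indicator_inter_one {Ω : Type*} {A B : Set Ω} (ω : Ω) :
    (A ∩ B).indicator (fun _ => (1:ℝ)) ω
      = A.indicator (fun _ => (1:ℝ)) ω * B.indicator (fun _ => (1:ℝ)) ω := by
  classical
  by_cases hA : ω ∈ A <;> by_cases hB : ω ∈ B <;>
    simp [Set.indicator_apply, hA, hB]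

/-- The variance of the number of pure Nash equilibria equals
`τ_N² = 2^N b_N + 2^N N (α(1-β)^(2N-2) − (1-β)^(2N))` where
`b_N = (1-β)^N (1 − (1-β)^N)`. -/
theorem variance_number_PNE (Ω : Type*) [MeasurableSpace Ω] (μ : Measure Ω)
    [IsProbabilityMeasure μ] (N : ℕ)
    (Z : (Fin N × (Fin N → Bool)) → Ω → ℝ)
    (hmeas : ∀ p, Measurable (Z p))
    (hindep : iIndepFun Z μ)
    (hident : ∀ p q, IdentDistrib (Z p) (Z q) μ μ)
    (α β : ℝ) (hβα : β = (1 - α) / 2)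
    (hαZ : ∀ p q, p ≠ q → μ {ω | Z p ω = Z q ω} = ENNReal.ofReal α)
    (hβZ : ∀ p q, p ≠ q → μ {ω | Z p ω < Z q ω} = ENNReal.ofReal β)
    (card𝒩 : Ω → ℕ)
    (hcard : ∀ ω, card𝒩 ω = (Finset.univ.filter
      (fun s : Fin N → Bool =>
        ∀ i : Fin N, Z (i, Function.update s i (!s i)) ω ≤ Z (i, s) ω)).card)
    (b : ℝ) (hb : b = (1 - β) ^ N * (1 - (1 - β) ^ N)) :
    variance (fun ω => (card𝒩 ω : ℝ)) μ
      = 2 ^ N * b + 2 ^ N * N * (α * (1 - β) ^ (2 * N - 2) - (1 - β) ^ (2 * N)) := by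
  classical
  rcases Nat.eq_zero_or_pos N with hN0 | hNpos
  · subst hN0
    have hconst : (fun ω => (card𝒩 ω : ℝ)) = fun _ => 1 := by
      funext ω
      rw [hcard ω]
      have : (Finset.univ.filter (fun s : Fin 0 → Bool =>
          ∀ i : Fin 0, Z (i, Function.update s i (!s i)) ω ≤ Z (i, s) ω)) = Finset.univ := by
        refine Finset.filter_true_of_mem fun s _ => ?_
        exact fun i => i.elim0
      rw [this, Finset.card_univ]
      simp
    have hv1 : variance (fun _ : Ω => (1:ℝ)) μ = 0 := by
      rw [variance_eq_sub (memLp_const 1)]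
      simp [Pi.pow_apply]
    rw [hconst, hv1, hb]
    norm_num
  -- main case N ≥ 1
  · -- basic positivity facts on α and β
    have j0 : Fin N := ⟨0, hNpos⟩
    set p₀ : Fin N × (Fin N → Bool) := (j0, fun _ => false) with hp₀
    set q₀ : Fin N × (Fin N → Bool) := (j0, fun _ => true) with hq₀
    have hpq₀ : p₀ ≠ q₀ := by
      intro h
      have := congrFun (congrArg Prod.snd h) j0
      simp at this
    have hL : μ {ω | Z p₀ ω < Z q₀ ω} = ENNReal.ofReal β := hβZ _ _ hpq₀
    have hG : μ {ω | Z q₀ ω < Z p₀ ω} = ENNReal.ofReal β := hβZ _ _ hpq₀.symm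
    have hEq : μ {ω | Z p₀ ω = Z q₀ ω} = ENNReal.ofReal α := hαZ _ _ hpq₀
    have hLc : {ω | Z p₀ ω < Z q₀ ω}ᶜ
        = {ω | Z p₀ ω = Z q₀ ω} ∪ {ω | Z q₀ ω < Z p₀ ω} := by
      ext ω
      simp only [Set.mem_compl_iff, Set.mem_setOf_eq, Set.mem_union, not_lt]
      rw [le_iff_lt_or_eq]
      tauto
    have hdisjEG : Disjoint {ω | Z p₀ ω = Z q₀ ω} {ω | Z q₀ ω < Z p₀ ω} := by
      rw [Set.disjoint_left]
      intro ω h1 h2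
      simp only [Set.mem_setOf_eq] at h1 h2
      rw [h1] at h2
      exact lt_irrefl _ h2
    have hmREq : MeasurableSet {ω | Z p₀ ω = Z q₀ ω} :=
      measurableSet_eq_fun (hmeas _) (hmeas _)
    have hmRG : MeasurableSet {ω | Z q₀ ω < Z p₀ ω} :=
      measurableSet_lt (hmeas _) (hmeas _)
    have hmRL : MeasurableSet {ω | Z p₀ ω < Z q₀ ω} :=
      measurableSet_lt (hmeas _) (hmeas _)
    have hβle1 : ENNReal.ofReal β ≤ 1 := by
      rw [← hL]; exact prob_le_one
    have hkey : max α 0 + max β 0 = 1 - max β 0 := by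
      have h1 : μ {ω | Z p₀ ω < Z q₀ ω}ᶜ = 1 - ENNReal.ofReal β := by
        rw [prob_compl_eq_one_sub hmRL, hL]
      have h2 : μ {ω | Z p₀ ω < Z q₀ ω}ᶜ = ENNReal.ofReal α + ENNReal.ofReal β := by
        rw [hLc, measure_union hdisjEG hmRG, hEq, hG]
      have h3 : ENNReal.ofReal α + ENNReal.ofReal β = 1 - ENNReal.ofReal β :=
        h2.symm.trans h1
      have h4 := congrArg ENNReal.toReal h3
      rw [ENNReal.toReal_add ENNReal.ofReal_ne_top ENNReal.ofReal_ne_top,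
        ENNReal.toReal_sub_of_le hβle1 ENNReal.one_ne_top,
        ENNReal.toReal_ofReal', ENNReal.toReal_ofReal', ENNReal.toReal_one] at h4
      exact h4
    have hβ0 : 0 ≤ β := by
      by_contra hβneg
      push_neg at hβneg
      have hmax : max β 0 = 0 := max_eq_right hβneg.le
      have hα1 : 1 < α := by rw [hβα] at hβneg; linarith
      have : max α 0 = 1 := by rw [hmax] at hkey; linarith
      rw [max_eq_left (by linarith : (0:ℝ) ≤ α)] at this
      linarith
    have hα0 : 0 ≤ α := by
      by_contra hαneg
      push_neg at hαneg
      have hmax : max α 0 = 0 := max_eq_right hαneg.le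
      have : max β 0 = 1/2 := by rw [hmax] at hkey; linarith
      rw [max_eq_left hβ0] at this
      rw [hβα] at this
      linarith
    have hsum1 : α + 2 * β = 1 := by rw [hβα]; ring
    have hβ1 : β ≤ 1 := by linarith
    -- probability of a single comparison event
    have hle : ∀ p q : Fin N × (Fin N → Bool), p ≠ q →
        μ {ω | Z p ω ≤ Z q ω} = ENNReal.ofReal (1 - β) := by
      intro p q hpq
      have hc : {ω | Z p ω ≤ Z q ω} = {ω | Z q ω < Z p ω}ᶜ := by
        ext ω; simp [not_lt]
      rw [hc, prob_compl_eq_one_sub (measurableSet_lt (hmeas _) (hmeas _)),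
        hβZ q p hpq.symm, ENNReal.ofReal_sub _ hβ0, ENNReal.ofReal_one]
    -- indicator representation
    have hEm : ∀ s, MeasurableSet (Eev Z s) := Eev_measurable Z hmeas
    set X : (Fin N → Bool) → Ω → ℝ := fun s => (Eev Z s).indicator (fun _ => 1) with hX
    have hfun : (fun ω => (card𝒩 ω : ℝ)) = fun ω => ∑ s : Fin N → Bool, X s ω := by
      funext ω
      rw [hcard ω, Finset.card_filter]
      push_cast
      refine Finset.sum_congr rfl fun s _ => ?_
      by_cases hs : ω ∈ Eev Z s
      · have hs' : ∀ i, Z (i, Function.update s i (!s i)) ω ≤ Z (i, s) ω := by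
          intro i; exact Set.mem_iInter.1 hs i
        rw [if_pos hs', hX]
        simp [Set.indicator_of_mem hs]
      · have hs' : ¬ ∀ i, Z (i, Function.update s i (!s i)) ω ≤ Z (i, s) ω := by
          intro h; exact hs (Set.mem_iInter.2 fun i => h i)
        rw [if_neg hs', hX]
        simp [Set.indicator_of_notMem hs]
    have hX2 : ∀ s, MemLp (X s) 2 μ := fun s =>
      memLp_indicator_const 2 (hEm s) 1 (Or.inr (measure_ne_top μ _))
    have hf2 : MemLp (fun ω => (card𝒩 ω : ℝ)) 2 μ := by
      rw [hfun]
      have h := memLp_finset_sum' (μ := μ) (Finset.univ : Finset (Fin N → Bool)) (fun s _ => hX2 s)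
      rwa [show (∑ i : Fin N → Bool, X i) = fun ω => ∑ s : Fin N → Bool, X s ω
        from funext fun ω => by simp [Finset.sum_apply]] at h
    rw [variance_eq_sub hf2]
    -- first moment
    have hXint : ∀ s, ∫ ω, X s ω ∂μ = (μ (Eev Z s)).toReal := by
      intro s
      rw [hX]
      rw [MeasureTheory.integral_indicator_const (1:ℝ) (hEm s)]
      simp [Measure.real]
    have hmean : ∫ ω, (card𝒩 ω : ℝ) ∂μ = ∑ s : Fin N → Bool, (μ (Eev Z s)).toReal := by
      rw [show (fun ω => (card𝒩 ω : ℝ)) = fun ω => ∑ s : Fin N → Bool, X s ω from hfun]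
      rw [integral_finset_sum _ (fun s _ => (hX2 s).integrable one_le_two)]
      exact Finset.sum_congr rfl fun s _ => hXint s
    -- second moment
    have hsqfun : (fun ω => (card𝒩 ω : ℝ)) ^ 2
        = fun ω => ∑ s : Fin N → Bool, ∑ t : Fin N → Bool,
            (Eev Z s ∩ Eev Z t).indicator (fun _ => (1:ℝ)) ω := by
      funext ω
      rw [Pi.pow_apply, congrFun hfun ω, sq, Finset.sum_mul_sum]
      refine Finset.sum_congr rfl fun s _ => Finset.sum_congr rfl fun t _ => ?_
      rw [indicator_inter_one]
    have hsq : ∫ ω, ((fun ω => (card𝒩 ω : ℝ)) ^ 2) ω ∂μ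
        = ∑ s : Fin N → Bool, ∑ t : Fin N → Bool, (μ (Eev Z s ∩ Eev Z t)).toReal := by
      rw [show ((fun ω => (card𝒩 ω : ℝ)) ^ 2) = _ from hsqfun]
      rw [integral_finset_sum _ (fun s _ => integrable_finset_sum _ (fun t _ =>
        (memLp_indicator_const 2 ((hEm s).inter (hEm t)) (1:ℝ)
          (Or.inr (measure_ne_top μ _))).integrable one_le_two))]
      refine Finset.sum_congr rfl fun s _ => ?_
      rw [integral_finset_sum _ (fun t _ =>
        (memLp_indicator_const 2 ((hEm s).inter (hEm t)) (1:ℝ)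
          (Or.inr (measure_ne_top μ _))).integrable one_le_two)]
      refine Finset.sum_congr rfl fun t _ => ?_
      rw [MeasureTheory.integral_indicator_const (1:ℝ) ((hEm s).inter (hEm t))]
      simp [Measure.real]
    -- values
    have hp0 : (0:ℝ) ≤ 1 - β := by linarith
    have hEs : ∀ s, (μ (Eev Z s)).toReal = (1 - β) ^ N := by
      intro s
      rw [meas_Eev Z hmeas hindep hle hβ1 s, ENNReal.toReal_ofReal (pow_nonneg hp0 N)]
    have hq : ∀ s t : Fin N → Bool, (μ (Eev Z s ∩ Eev Z t)).toReal
        = if t = s then (1 - β) ^ N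
          else if ∃ j, nflip s j = t then α * (1 - β) ^ (2 * N - 2)
          else (1 - β) ^ (2 * N) := by
      intro s t
      by_cases hts : t = s
      · subst hts
        rw [if_pos rfl, Set.inter_self]
        exact hEs t
      · rw [if_neg hts]
        by_cases hnb : ∃ j, nflip s j = t
        · obtain ⟨j, rfl⟩ := hnb
          rw [if_pos ⟨j, rfl⟩,
            meas_Eev_inter_nbr Z hmeas hindep hαZ hle hα0 hβ1 s j,
            ENNReal.toReal_ofReal (by positivity)]
        · push_neg at hnb
          rw [if_neg (by push_neg; exact hnb),
            meas_Eev_inter_far Z hmeas hindep hle hβ1 s t hts hnb,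
            ENNReal.toReal_ofReal (pow_nonneg hp0 _)]
    -- inner sum
    set δ : ℝ := α * (1 - β) ^ (2 * N - 2) - (1 - β) ^ (2 * N) with hδ
    have hpow2 : (1 - β) ^ N * (1 - β) ^ N = (1 - β) ^ (2 * N) := by
      rw [← pow_add, two_mul]
    have hinner : ∀ s : Fin N → Bool,
        ∑ t : Fin N → Bool, ((μ (Eev Z s ∩ Eev Z t)).toReal - (1 - β) ^ N * (1 - β) ^ N)
          = b + N * δ := by
      intro s
      set nbrs : Finset (Fin N → Bool) := Finset.univ.image (nflip s) with hnbrs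
      have hsn : s ∉ nbrs := by
        rw [hnbrs]
        simp only [Finset.mem_image, Finset.mem_univ, true_and]
        rintro ⟨j, hj⟩
        exact nflip_ne s j hj
      have hvanish : ∀ t ∈ Finset.univ, t ∉ insert s nbrs →
          (μ (Eev Z s ∩ Eev Z t)).toReal - (1 - β) ^ N * (1 - β) ^ N = 0 := by
        intro t _ ht
        simp only [Finset.mem_insert, hnbrs, Finset.mem_image, Finset.mem_univ, true_and,
          not_or, not_exists] at ht
        rw [hq s t, if_neg ht.1, if_neg (by push_neg; exact ht.2), hpow2]
        ring
      rw [← Finset.sum_subset (Finset.subset_univ (insert s nbrs)) hvanish,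
        Finset.sum_insert hsn]
      have hterm_s : (μ (Eev Z s ∩ Eev Z s)).toReal - (1 - β) ^ N * (1 - β) ^ N = b := by
        rw [hq s s, if_pos rfl, hb]; ring
      have hterm_nbr : ∑ t ∈ nbrs,
          ((μ (Eev Z s ∩ Eev Z t)).toReal - (1 - β) ^ N * (1 - β) ^ N) = N * δ := by
        rw [hnbrs, Finset.sum_image (fun i _ j _ h => nflip_inj_idx h)]
        have : ∀ j : Fin N, (μ (Eev Z s ∩ Eev Z (nflip s j))).toReal
            - (1 - β) ^ N * (1 - β) ^ N = δ := by
          intro j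
          rw [hq s (nflip s j), if_neg (nflip_ne s j), if_pos ⟨j, rfl⟩, hδ, hpow2]
        rw [Finset.sum_congr rfl (fun j _ => this j), Finset.sum_const, Finset.card_univ,
          Fintype.card_fin, nsmul_eq_mul]
      rw [hterm_s, hterm_nbr]
    -- assemble
    have hcardV : (Finset.univ : Finset (Fin N → Bool)).card = 2 ^ N := by
      rw [Finset.card_univ]
      simp [Fintype.card_fun]
    rw [hsq, hmean]
    have hsqsum : (∑ s : Fin N → Bool, (μ (Eev Z s)).toReal) ^ 2
        = ∑ s : Fin N → Bool, ∑ t : Fin N → Bool,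
            (1 - β) ^ N * (1 - β) ^ N := by
      rw [sq, Finset.sum_mul_sum]
      exact Finset.sum_congr rfl fun s _ => Finset.sum_congr rfl fun t _ => by
        rw [hEs s, hEs t]
    rw [hsqsum, ← Finset.sum_sub_distrib]
    have : ∀ s : Fin N → Bool,
        (∑ t : Fin N → Bool, (μ (Eev Z s ∩ Eev Z t)).toReal)
          - (∑ t : Fin N → Bool, (1 - β) ^ N * (1 - β) ^ N) = b + N * δ := by
      intro s
      rw [← Finset.sum_sub_distrib]
      exact hinner s
    rw [Finset.sum_congr rfl (fun s _ => this s), Finset.sum_const, hcardV, nsmul_eq_mul, hδ]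
    push_cast
    ring
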